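/- Let π be a set of primes, G a finite group, N a normal subgroup of G and H a subgroup with N ≤ H ≤ G. If H/N is N^π-Dnormal in G/N, then H is N^π-Dnormal in G. -/

import Mathlib

/-- A (finite) group is a `π`-group if every prime dividing its order lies in `π`. -/
def IsPiGroup (π : Set ℕ) (G : Type*) [Group G] : Prop :=
  ∀ p : ℕ, p.Prime → p ∣ Nat.card G → p ∈ π

/-- `O^π(G)`: the smallest normal subgroup of `G` whose quotient is a `π`-group
(recall that `N.index = Nat.card (G ⧸ N)`). -/
def piResidual (π : Set ℕ) (G : Type*) [Group G] : Subgroup G :=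
  ⨅ N ∈ {N : Subgroup G | N.Normal ∧ ∀ p : ℕ, p.Prime → p ∣ N.index → p ∈ π}, N

/-- `O_π(G)`: the largest normal `π`-subgroup of `G`. -/
def piCore (π : Set ℕ) (G : Type*) [Group G] : Subgroup G :=
  ⨆ N ∈ {N : Subgroup G | N.Normal ∧ IsPiGroup π N}, N

/-- `O^π(H)` for a subgroup `H ≤ G`, regarded as a subgroup of `G`. -/
def piResidualIn (π : Set ℕ) {G : Type*} [Group G] (H : Subgroup G) : Subgroup G :=
  (piResidual π H).map H.subtype

/-- `H` is `N^π`-Dnormal in `G`: if `|π| ≤ 1` this means `H` is normal in `G`; if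
`|π| ≥ 2` it means that `O^π(H)` is normal in `G` and `O^π(G)` normalizes `H`. -/
def IsDnormal (π : Set ℕ) {G : Type*} [Group G] (H : Subgroup G) : Prop :=
  (π.Subsingleton ∧ H.Normal) ∨
  (¬ π.Subsingleton ∧ (piResidualIn π H).Normal ∧ piResidual π G ≤ Subgroup.normalizer (H : Set G))

/-- `S` is `N^π`-Dsubnormal in `G`: there is a chain `S = S₀ ≤ S₁ ≤ ⋯ ≤ Sₙ = G`
with each `Sᵢ` being `N^π`-Dnormal in `Sᵢ₊₁`. -/
def IsDsubnormal (π : Set ℕ) {G : Type*} [Group G] (S : Subgroup G) : Prop :=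
  ∃ (n : ℕ) (c : Fin (n + 1) → Subgroup G), c 0 = S ∧ c (Fin.last n) = ⊤ ∧
    ∀ i : Fin n, c i.castSucc ≤ c i.succ ∧
      IsDnormal π ((c i.castSucc).subgroupOf (c i.succ))

/-- `H` is subnormal in `G`. -/
def IsSubnormal' {G : Type*} [Group G] (H : Subgroup G) : Prop :=
  ∃ (n : ℕ) (c : Fin (n + 1) → Subgroup G), c 0 = H ∧ c (Fin.last n) = ⊤ ∧
    ∀ i : Fin n, c i.castSucc ≤ c i.succ ∧
      ((c i.castSucc).subgroupOf (c i.succ)).Normal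

/-- The class `N^π`: groups that are the (internal) direct product of a `π`-group and a
nilpotent `π'`-group. -/
def IsNPiGroup (π : Set ℕ) (G : Type*) [Group G] : Prop :=
  ∃ H K : Subgroup G, H.Normal ∧ K.Normal ∧ H ⊓ K = ⊥ ∧ H ⊔ K = ⊤ ∧
    IsPiGroup π H ∧ IsPiGroup πᶜ K ∧ Group.IsNilpotent K

/-- The `N^π`-residual `G^{N^π}`: the smallest normal subgroup of `G` whose quotient
belongs to the class `N^π`. -/
def nPiResidual (π : Set ℕ) (G : Type*) [Group G] : Subgroup G :=
  ⨅ N ∈ {N : Subgroup G | ∃ h : N.Normal, letI := h; IsNPiGroup π (G ⧸ N)}, N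

/-- `G` is `π'`-soluble: it has a normal series each of whose factors is either a
`π`-group or a `p`-group for some prime `p ∉ π`. -/
def IsPiPrimeSoluble (π : Set ℕ) (G : Type*) [Group G] : Prop :=
  ∃ (n : ℕ) (c : Fin (n + 1) → Subgroup G), c 0 = ⊥ ∧ c (Fin.last n) = ⊤ ∧
    ∀ i : Fin n, c i.castSucc ≤ c i.succ ∧
      ((c i.castSucc).subgroupOf (c i.succ)).Normal ∧
      ((∀ p : ℕ, p.Prime → p ∣ ((c i.castSucc).subgroupOf (c i.succ)).index → p ∈ π) ∨
        ∃ p : ℕ, p.Prime ∧ p ∉ π ∧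
          ∃ k : ℕ, ((c i.castSucc).subgroupOf (c i.succ)).index = p ^ k)

/-- An `N^π`-Fitting set of `G`. -/
def IsNPiFittingSet (π : Set ℕ) {G : Type*} [Group G] (F : Set (Subgroup G)) : Prop :=
  F.Nonempty ∧
  (∀ S ∈ F, ∀ T : Subgroup G, T ≤ S → IsDsubnormal π (T.subgroupOf S) → T ∈ F) ∧
  (∀ S ∈ F, ∀ T ∈ F, IsDnormal π (S.subgroupOf (S ⊔ T)) →
    IsDnormal π (T.subgroupOf (S ⊔ T)) → S ⊔ T ∈ F) ∧
  (∀ S ∈ F, ∀ x : G, S.map (MulAut.conj x).toMonoidHom ∈ F)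

/-- The `F`-radical `H_F` of a subgroup `H` of `G`: the join of all subgroups of `H`
belonging to `F` that are normal in `H`. -/
def fittingRadical {G : Type*} [Group G] (F : Set (Subgroup G)) (H : Subgroup G) : Subgroup G :=
  ⨆ S ∈ {S : Subgroup G | S ∈ F ∧ S ≤ H ∧ (S.subgroupOf H).Normal}, S

/-- `M` is an `F`-maximal subgroup of `K`. -/
def IsFMaximalIn {G : Type*} [Group G] (F : Set (Subgroup G)) (M K : Subgroup G) : Prop :=
  M ∈ F ∧ M ≤ K ∧ ∀ S ∈ F, S ≤ K → M ≤ S → S = M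

/-- `V` is an `F`-injector of `G`. -/
def IsInjector {G : Type*} [Group G] (F : Set (Subgroup G)) (V : Subgroup G) : Prop :=
  ∀ K : Subgroup G, IsSubnormal' K → IsFMaximalIn F (V ⊓ K) K

/-- `V` is an `F`-injector of the subgroup `N` of `G`. -/
def IsInjectorIn {G : Type*} [Group G] (F : Set (Subgroup G)) (V N : Subgroup G) : Prop :=
  V ≤ N ∧ ∀ K : Subgroup G, K ≤ N → IsSubnormal' (K.subgroupOf N) → IsFMaximalIn F (V ⊓ K) K

/-- `M` is an `N^π`-maximal subgroup of `X`. -/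
def IsNPiMaximal (π : Set ℕ) {X : Type*} [Group X] (M : Subgroup X) : Prop :=
  IsNPiGroup π M ∧ ∀ M' : Subgroup X, IsNPiGroup π M' → M ≤ M' → M' = M

/-- `U` is an `N^π`-projector of `G`: `UK/K` is `N^π`-maximal in `G/K` for every
normal subgroup `K` of `G`. -/
def IsNPiProjector (π : Set ℕ) {G : Type*} [Group G] (U : Subgroup G) : Prop :=
  ∀ K : Subgroup G, ∀ hK : K.Normal,
    letI := hK
    IsNPiMaximal π ((U ⊔ K).map (QuotientGroup.mk' K))

/-- An `N^π`-Fitting class of (finite) groups: a non-empty isomorphism-closed class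
closed under `N^π`-Dnormal subgroups and under joins of pairs of `N^π`-Dnormal
subgroups. -/
def IsNPiFittingClass (π : Set ℕ) (F : (H : Type) → [_inst : Group H] → Prop) : Prop :=
  (∃ (H : Type) (g : Group H) (_ : Finite H), F H (_inst := g)) ∧
  (∀ (H K : Type) [Group H] [Group K] [Finite H] [Finite K],
    F H → Nonempty (H ≃* K) → F K) ∧
  (∀ (H : Type) [Group H] [Finite H] (N : Subgroup H),
    F H → IsDnormal π N → F ↥N) ∧
  (∀ (H : Type) [Group H] [Finite H] (M N : Subgroup H),
    F ↥M → F ↥N → IsDnormal π M → IsDnormal π N → M ⊔ N = ⊤ → F H)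

section Aux
variable (π : Set ℕ)

/-- The defining set for the π-residual. -/
def piSet (G : Type*) [Group G] : Set (Subgroup G) :=
  {N : Subgroup G | N.Normal ∧ ∀ p : ℕ, p.Prime → p ∣ N.index → p ∈ π}

lemma piResidual_eq_sInf (G : Type*) [Group G] :
    piResidual π G = sInf (piSet π G) := by
  rw [piResidual, sInf_eq_iInf]; rfl

lemma piResidual_le {G : Type*} [Group G] {K : Subgroup G} (hK : K ∈ piSet π G) :
    piResidual π G ≤ K := by
  rw [piResidual_eq_sInf]; exact sInf_le hK

lemma top_mem_piSet (G : Type*) [Group G] : (⊤ : Subgroup G) ∈ piSet π G := by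
  refine ⟨inferInstance, fun p hp hdvd => ?_⟩
  rw [Subgroup.index_top] at hdvd
  exact absurd (Nat.eq_one_of_dvd_one hdvd) hp.ne_one

lemma inf_mem_piSet {G : Type*} [Group G] {K L : Subgroup G}
    (hK : K ∈ piSet π G) (hL : L ∈ piSet π G) : K ⊓ L ∈ piSet π G := by
  obtain ⟨hKn, hKi⟩ := hK
  obtain ⟨hLn, hLi⟩ := hL
  refine ⟨⟨fun n hn g => ⟨hKn.conj_mem n hn.1 g, hLn.conj_mem n hn.2 g⟩⟩,
    fun p hp hdvd => ?_⟩
  rw [← Subgroup.relIndex_mul_index (inf_le_right : K ⊓ L ≤ L),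
    Subgroup.inf_relIndex_right] at hdvd
  rcases hp.dvd_mul.mp hdvd with h | h
  · exact hKi p hp (h.trans (Subgroup.relIndex_dvd_index_of_normal K L))
  · exact hLi p hp h

/-- In a finite group, the π-residual itself has π-index (Lemma 1). -/
lemma piResidual_mem_piSet (G : Type*) [Group G] [Finite G] :
    piResidual π G ∈ piSet π G := by
  have hfin : (piSet π G).Finite := Set.toFinite _
  have hne : hfin.toFinset.Nonempty := ⟨⊤, hfin.mem_toFinset.mpr (top_mem_piSet π G)⟩
  have heq : sInf (piSet π G) = hfin.toFinset.inf' hne id := by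
    rw [Finset.inf'_eq_inf, Finset.inf_id_eq_sInf, hfin.coe_toFinset]
  rw [piResidual_eq_sInf, heq]
  exact Finset.inf'_mem (piSet π G) (fun x hx y hy => inf_mem_piSet π hx hy) _ _ _
    (fun i hi => hfin.mem_toFinset.mp hi)

lemma piResidual_normal (G : Type*) [Group G] [Finite G] : (piResidual π G).Normal :=
  (piResidual_mem_piSet π G).1

/-- Under a surjective homomorphism with finite source, the π-residual maps onto
the π-residual. -/
lemma map_piResidual {G G' : Type*} [Group G] [Group G'] [Finite G]
    (f : G →* G') (hf : Function.Surjective f) :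
    (piResidual π G).map f = piResidual π G' := by
  apply le_antisymm
  · rw [piResidual_eq_sInf π G']
    refine le_sInf fun K hK => Subgroup.map_le_iff_le_comap.mpr (piResidual_le π ?_)
    refine ⟨hK.1.comap f, fun p hp hdvd => ?_⟩
    rw [Subgroup.index_comap_of_surjective K hf] at hdvd
    exact hK.2 p hp hdvd
  · obtain ⟨hn, hi⟩ := piResidual_mem_piSet π G
    refine piResidual_le π ⟨hn.map f hf, fun p hp hdvd => ?_⟩
    rw [← Subgroup.index_comap_of_surjective _ hf, Subgroup.comap_map_eq] at hdvd
    exact hi p hp (hdvd.trans (Subgroup.index_dvd_of_le le_sup_left))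

/-- Monotonicity of `piResidualIn`. -/
lemma piResidualIn_mono {G : Type*} [Group G] {A B : Subgroup G} (hAB : A ≤ B) :
    piResidualIn π A ≤ piResidualIn π B := by
  have key : (piResidual π A).map (Subgroup.inclusion hAB) ≤ piResidual π B := by
    rw [piResidual_eq_sInf π ↥B]
    refine le_sInf fun K hK => Subgroup.map_le_iff_le_comap.mpr (piResidual_le π ?_)
    haveI := hK.1
    refine ⟨hK.1.comap _, fun p hp hdvd => ?_⟩
    rw [Subgroup.index_comap] at hdvd
    exact hK.2 p hp (hdvd.trans (Subgroup.relIndex_dvd_index_of_normal K _))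
  calc piResidualIn π A
      = ((piResidual π A).map (Subgroup.inclusion hAB)).map B.subtype := by
        rw [Subgroup.map_map, Subgroup.subtype_comp_inclusion]; rfl
    _ ≤ piResidualIn π B := Subgroup.map_mono key

/-- `piResidualIn` commutes with taking images of subgroups. -/
lemma piResidualIn_map {G G' : Type*} [Group G] [Group G'] [Finite G]
    (f : G →* G') (H : Subgroup G) :
    piResidualIn π (H.map f) = (piResidualIn π H).map f := by
  have : piResidual π ↥(H.map f) = (piResidual π ↥H).map (f.subgroupMap H) :=
    (map_piResidual π (f.subgroupMap H) (f.subgroupMap_surjective H)).symm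
  rw [piResidualIn, this, Subgroup.map_map, piResidualIn, Subgroup.map_map]
  congr 1

/-- A normal subgroup is fixed by conjugation maps. -/
lemma map_conj_eq {G : Type*} [Group G] {L : Subgroup G} (hL : L.Normal) (g : G) :
    L.map (MulAut.conj g).toMonoidHom = L := by
  ext x
  simp only [Subgroup.mem_map, MulEquiv.coe_toMonoidHom, MulAut.conj_apply]
  constructor
  · rintro ⟨y, hy, rfl⟩
    exact hL.conj_mem y hy g
  · intro hx
    exact ⟨g⁻¹ * x * g, hL.conj_mem' x hx g, by group⟩

/-- `piResidualIn` of a normal subgroup is normal. -/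
lemma piResidualIn_normal {G : Type*} [Group G] [Finite G] {L : Subgroup G}
    (hL : L.Normal) : (piResidualIn π L).Normal := by
  constructor
  intro n hn g
  have h1 : (piResidualIn π L).map (MulAut.conj g).toMonoidHom = piResidualIn π L := by
    rw [← piResidualIn_map, map_conj_eq hL g]
  rw [← h1]
  exact ⟨n, hn, rfl⟩

lemma piResidualIn_le {G : Type*} [Group G] (H : Subgroup G) : piResidualIn π H ≤ H :=
  Subgroup.map_subtype_le _

/-- Idempotency: `O^π(O^π(H)) = O^π(H)`. -/
lemma piResidualIn_idem {G : Type*} [Group G] [Finite G] (H : Subgroup G) :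
    piResidualIn π (piResidualIn π H) = piResidualIn π H := by
  -- work inside ↥H
  set R : Subgroup ↥H := piResidual π ↥H with hR
  have hRn : R.Normal := piResidual_normal π ↥H
  have hJR : piResidualIn π R ≤ R := piResidualIn_le π R
  have hJmem : piResidualIn π R ∈ piSet π ↥H := by
    refine ⟨piResidualIn_normal π hRn, fun p hp hdvd => ?_⟩
    rw [← Subgroup.relIndex_mul_index hJR] at hdvd
    have hrel : (piResidualIn π R).relIndex R = (piResidual π ↥R).index := by
      show ((piResidualIn π R).subgroupOf R).index = _
      rw [piResidualIn, Subgroup.subgroupOf,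
        Subgroup.comap_map_eq_self_of_injective R.subtype_injective]
    rcases hp.dvd_mul.mp hdvd with h | h
    · rw [hrel] at h
      exact (piResidual_mem_piSet π ↥R).2 p hp h
    · exact (piResidual_mem_piSet π ↥H).2 p hp h
  have hRJ : R ≤ piResidualIn π R := piResidual_le π hJmem
  have hJ : piResidualIn π R = R := le_antisymm hJR hRJ
  -- push down to G
  have : piResidualIn π (R.map H.subtype) = (piResidualIn π R).map H.subtype :=
    piResidualIn_map π H.subtype R
  rw [hJ] at this
  exact this

end Aux

/-- Lemma 1.4(4): if `N ≤ H` and `H/N` is `N^π`-Dnormal in `G/N`, then `H` is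
`N^π`-Dnormal in `G`. -/
theorem dnormal_of_quotient (π : Set ℕ) (hπ : ∀ p ∈ π, p.Prime)
    (G : Type*) [Group G] [Finite G] (N H : Subgroup G) [N.Normal] (hNH : N ≤ H)
    (h : IsDnormal π (H.map (QuotientGroup.mk' N))) :
    IsDnormal π H := by
  classical
  set f := QuotientGroup.mk' N with hf
  have hfs : Function.Surjective f := QuotientGroup.mk'_surjective N
  have hker : f.ker = N := QuotientGroup.ker_mk' N
  have hcomap : ∀ K : Subgroup G, Subgroup.comap f (Subgroup.map f K) = K ⊔ N := by
    intro K; rw [Subgroup.comap_map_eq, hker]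
  rcases h with ⟨hsing, hnorm⟩ | ⟨hns, hKn, hres⟩
  · left
    refine ⟨hsing, ?_⟩
    have hH : Subgroup.comap f (Subgroup.map f H) = H := by
      rw [hcomap, sup_eq_left.mpr hNH]
    rw [← hH]
    exact hnorm.comap f
  · right
    refine ⟨hns, ?_, ?_⟩
    · -- normality of `O^π(H)` in `G`
      have hKmap : piResidualIn π (H.map f) = (piResidualIn π H).map f :=
        piResidualIn_map π f H
      set K := piResidualIn π H with hK
      have hKH : K ≤ H := piResidualIn_le π H
      rw [hKmap] at hKn
      have hLnormal : (K ⊔ N).Normal := by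
        rw [← hcomap K]; exact hKn.comap f
      have hLH : K ⊔ N ≤ H := sup_le hKH hNH
      have hEq : piResidualIn π (K ⊔ N) = K := by
        apply le_antisymm
        · exact piResidualIn_mono π hLH
        · calc K = piResidualIn π K := (piResidualIn_idem π H).symm
            _ ≤ piResidualIn π (K ⊔ N) := piResidualIn_mono π le_sup_left
      rw [← hEq]
      exact piResidualIn_normal π hLnormal
    · -- `O^π(G)` normalizes `H`
      intro g hg
      have hg' : f g ∈ piResidual π (G ⧸ N) := by
        rw [← map_piResidual π f hfs]; exact ⟨g, hg, rfl⟩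
      have hmemH : ∀ x : G, x ∈ H ↔ f x ∈ H.map f := by
        intro x
        constructor
        · intro hx; exact ⟨x, hx, rfl⟩
        · intro hx
          have hx' : x ∈ Subgroup.comap f (Subgroup.map f H) := hx
          rwa [hcomap, sup_eq_left.mpr hNH] at hx'
      rw [Subgroup.mem_normalizer_iff]
      intro x
      have hiff := Subgroup.mem_normalizer_iff.mp (hres hg') (f x)
      rw [hmemH x, hmemH (g * x * g⁻¹), map_mul, map_mul, map_inv]
      exact hiff
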